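/- Let X be a finite metric space and let q_δ(S) = Per(S) / min{μ(S), μ(Sᶜ)}^{(δ−1)/δ} be the isoperimetric ratio of a subset S of the vertex set of a finite directed graph G with respect to edge probability measure ν, edge lengths d, vertex measure μ = μ_α(ν), and exponent δ ≥ 1. If S ⊆ V(G) satisfies μ(S) ≤ μ(Sᶜ) and S₁, …, Sₙ are the connected components of S, then q_δ(S) ≥ min_{1 ≤ j ≤ n} q_δ(Sⱼ). -/

import Mathlib

/-- Undirected adjacency induced by a directed edge set. -/
def GAdj {V E : Type*} (src tgt : E → V) (x y : V) : Prop :=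
  ∃ e, (src e = x ∧ tgt e = y) ∨ (src e = y ∧ tgt e = x)

/-- Reachability within a vertex set `S` (paths staying inside `S`). -/
def ReachIn {V E : Type*} (src tgt : E → V) (S : Finset V) (x y : V) : Prop :=
  Relation.ReflTransGen (fun a b => a ∈ S ∧ b ∈ S ∧ GAdj src tgt a b) x y

/-- `C` is a connected component of `S`: the set of vertices of `S` reachable within `S`
from some vertex of `S`. -/
def IsConnComponent {V E : Type*} (src tgt : E → V) (S C : Finset V) : Prop :=
  ∃ x ∈ S, ∀ y, y ∈ C ↔ y ∈ S ∧ ReachIn src tgt S x y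

lemma reachIn_symm {V E : Type*} (src tgt : E → V) (S : Finset V) :
    Symmetric (ReachIn src tgt S) := by
  refine fun x y h => (@Relation.ReflTransGen.symmetric _ (fun a b => a ∈ S ∧ b ∈ S ∧ GAdj src tgt a b) ⟨?_⟩).symm x y h
  rintro a b ⟨ha, hb, e, h⟩
  exact ⟨hb, ha, e, h.symm⟩

lemma component_unique {V E : Type*} (src tgt : E → V) (S C C' : Finset V)
    (hC : IsConnComponent src tgt S C) (hC' : IsConnComponent src tgt S C')
    (a : V) (haC : a ∈ C) (haC' : a ∈ C') : C = C' := by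
  obtain ⟨x, hx, hCx⟩ := hC
  obtain ⟨x', hx', hCx'⟩ := hC'
  have hxa : ReachIn src tgt S x a := ((hCx a).1 haC).2
  have hx'a : ReachIn src tgt S x' a := ((hCx' a).1 haC').2
  ext y
  rw [hCx y, hCx' y]
  constructor
  · rintro ⟨hyS, hxy⟩
    exact ⟨hyS, hx'a.trans ((reachIn_symm src tgt S hxa).trans hxy)⟩
  · rintro ⟨hyS, hx'y⟩
    exact ⟨hyS, hxa.trans ((reachIn_symm src tgt S hx'a).trans hx'y)⟩

lemma component_closed {V E : Type*} (src tgt : E → V) (S C : Finset V)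
    (hC : IsConnComponent src tgt S C) (x y : V) (hx : x ∈ C) (hyS : y ∈ S)
    (hadj : GAdj src tgt x y) : y ∈ C := by
  obtain ⟨w, hw, hCw⟩ := hC
  obtain ⟨hxS, hwx⟩ := (hCw x).1 hx
  exact (hCw y).2 ⟨hyS, hwx.tail ⟨hxS, hyS, hadj⟩⟩

lemma rpow_sum_le_sum_rpow {ι : Type*} (T : Finset ι) (hT : T.Nonempty) (f : ι → ℝ)
    (hf : ∀ i, 0 ≤ f i) {θ : ℝ} (h0 : 0 ≤ θ) (h1 : θ ≤ 1) :
    (∑ i ∈ T, f i) ^ θ ≤ ∑ i ∈ T, (f i) ^ θ := by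
  have two : ∀ a b : ℝ, 0 ≤ a → 0 ≤ b → (a + b) ^ θ ≤ a ^ θ + b ^ θ := by
    intro a b ha hb
    have h := NNReal.rpow_add_le_add_rpow a.toNNReal b.toNNReal h0 h1
    have h' := (NNReal.coe_le_coe).2 h
    simpa [NNReal.coe_rpow, NNReal.coe_add, Real.coe_toNNReal a ha,
      Real.coe_toNNReal b hb] using h'
  induction hT using Finset.Nonempty.cons_induction with
  | singleton i => simp
  | cons i T hi hTne ih =>
    rw [Finset.sum_cons, Finset.sum_cons]
    calc (f i + ∑ x ∈ T, f x) ^ θ ≤ (f i) ^ θ + (∑ x ∈ T, f x) ^ θ :=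
          two _ _ (hf i) (Finset.sum_nonneg fun x _ => hf x)
      _ ≤ (f i) ^ θ + ∑ x ∈ T, (f x) ^ θ := by linarith

/-- The isoperimetric ratio of a set `S` with `μ(S) ≤ μ(Sᶜ)` is at least the minimum of the
isoperimetric ratios of its connected components. -/
theorem isoperimetric_ratio_ge_min_components {V E : Type*} [Fintype V] [Fintype E]
    [DecidableEq V]
    (src tgt : E → V)
    (ν : E → ℝ) (hν0 : ∀ e, 0 ≤ ν e) (hν1 : ∑ e, ν e = 1)
    (d : E → ℝ) (hd : ∀ e, 0 < d e)
    (α : E → ℝ) (hα : ∀ e, 0 < α e ∧ α e < 1)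
    (δ : ℝ) (hδ : 1 ≤ δ)
    (μ : V → ℝ)
    (hμ : ∀ x, μ x = (∑ e ∈ Finset.univ.filter (fun e => tgt e = x), ν e * α e)
                   + ∑ e ∈ Finset.univ.filter (fun e => src e = x), ν e * (1 - α e))
    (Per : Finset V → ℝ)
    (hPer : ∀ A, Per A = ∑ e,
      if (src e ∈ A ∧ tgt e ∉ A) ∨ (src e ∉ A ∧ tgt e ∈ A) then ν e / d e else 0)
    (q : Finset V → ℝ)
    (hq : ∀ A, q A = Per A / (min (∑ x ∈ A, μ x) (∑ x ∈ Aᶜ, μ x)) ^ ((δ - 1) / δ))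
    (S : Finset V) (hS : (∑ x ∈ S, μ x) ≤ ∑ x ∈ Sᶜ, μ x)
    (n : ℕ) (hn : 0 < n) (Sj : Fin n → Finset V)
    (hcomp : ∀ j, IsConnComponent src tgt S (Sj j))
    (hcover : ∀ x ∈ S, ∃ j, x ∈ Sj j) :
    Finset.inf' Finset.univ ⟨⟨0, hn⟩, Finset.mem_univ _⟩ (fun j => q (Sj j)) ≤ q S := by
  classical
  have hδ0 : (0 : ℝ) < δ := lt_of_lt_of_le one_pos hδ
  set θ : ℝ := (δ - 1) / δ with hθdef
  have hθ0 : 0 ≤ θ := div_nonneg (by linarith) hδ0.le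
  have hθ1 : θ ≤ 1 := by rw [hθdef, div_le_one hδ0]; linarith
  have hμ0 : ∀ x, 0 ≤ μ x := by
    intro x
    rw [hμ x]
    have h1 : (0:ℝ) ≤ ∑ e ∈ Finset.univ.filter (fun e => tgt e = x), ν e * α e :=
      Finset.sum_nonneg fun e _ => mul_nonneg (hν0 e) (hα e).1.le
    have h2 : (0:ℝ) ≤ ∑ e ∈ Finset.univ.filter (fun e => src e = x), ν e * (1 - α e) :=
      Finset.sum_nonneg fun e _ => mul_nonneg (hν0 e) (by linarith [(hα e).2])
    linarith
  have hPer0 : ∀ A, 0 ≤ Per A := by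
    intro A
    rw [hPer A]
    refine Finset.sum_nonneg fun e _ => ?_
    split
    · exact div_nonneg (hν0 e) (hd e).le
    · exact le_refl 0
  have hsub : ∀ j, Sj j ⊆ S := by
    intro j y hy
    obtain ⟨x, hx, hC⟩ := hcomp j
    exact ((hC y).1 hy).1
  set T : Finset (Finset V) := Finset.univ.image Sj with hTdef
  have hTmem : ∀ C ∈ T, ∃ j, Sj j = C := by
    intro C hC
    simpa [hTdef] using hC
  have hTsub : ∀ C ∈ T, C ⊆ S := by
    intro C hC; obtain ⟨j, rfl⟩ := hTmem C hC; exact hsub j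
  have hTne : T.Nonempty := ⟨Sj ⟨0, hn⟩, Finset.mem_image_of_mem _ (Finset.mem_univ _)⟩
  have huniq : ∀ C ∈ T, ∀ C' ∈ T, ∀ a : V, a ∈ C → a ∈ C' → C = C' := by
    intro C hC C' hC' a haC haC'
    obtain ⟨j, rfl⟩ := hTmem C hC
    obtain ⟨k, rfl⟩ := hTmem C' hC'
    exact component_unique src tgt S _ _ (hcomp j) (hcomp k) a haC haC'
  have hbiUnion : T.biUnion id = S := by
    ext x
    simp only [Finset.mem_biUnion, id]
    constructor
    · rintro ⟨C, hC, hx⟩; exact hTsub C hC hx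
    · intro hx
      obtain ⟨j, hj⟩ := hcover x hx
      exact ⟨Sj j, Finset.mem_image_of_mem _ (Finset.mem_univ _), hj⟩
  have hdisj : ((T : Set (Finset V))).PairwiseDisjoint id := by
    intro C hC C' hC' hne
    simp only [Function.onFun, id]
    rw [Finset.disjoint_left]
    intro a haC haC'
    exact hne (huniq C hC C' hC' a haC haC')
  have hμsum : ∑ x ∈ S, μ x = ∑ C ∈ T, ∑ x ∈ C, μ x := by
    rw [← hbiUnion, Finset.sum_biUnion hdisj]
    rfl
  have hedge : ∀ e : E,
      (if (src e ∈ S ∧ tgt e ∉ S) ∨ (src e ∉ S ∧ tgt e ∈ S) then ν e / d e else 0)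
        = ∑ C ∈ T, (if (src e ∈ C ∧ tgt e ∉ C) ∨ (src e ∉ C ∧ tgt e ∈ C)
            then ν e / d e else 0) := by
    intro e
    by_cases haS : src e ∈ S <;> by_cases hbS : tgt e ∈ S
    · rw [if_neg (by simp [haS, hbS])]
      symm
      refine Finset.sum_eq_zero fun C hC => ?_
      obtain ⟨j, rfl⟩ := hTmem C hC
      rw [if_neg]
      rintro (⟨ha, hb⟩ | ⟨ha, hb⟩)
      · exact hb (component_closed src tgt S _ (hcomp j) _ _ ha hbS ⟨e, Or.inl ⟨rfl, rfl⟩⟩)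
      · exact ha (component_closed src tgt S _ (hcomp j) _ _ hb haS ⟨e, Or.inr ⟨rfl, rfl⟩⟩)
    · obtain ⟨j, hj⟩ := hcover _ haS
      have hjT : Sj j ∈ T := Finset.mem_image_of_mem _ (Finset.mem_univ _)
      rw [if_pos (Or.inl ⟨haS, hbS⟩)]
      symm
      have h0 : ∀ C ∈ T, C ≠ Sj j →
          (if (src e ∈ C ∧ tgt e ∉ C) ∨ (src e ∉ C ∧ tgt e ∈ C)
            then ν e / d e else 0) = 0 := by
        intro C hC hne
        rw [if_neg]
        rintro (⟨ha, hb⟩ | ⟨ha, hb⟩)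
        · exact hne (huniq C hC (Sj j) hjT _ ha hj)
        · exact hbS (hTsub C hC hb)
      rw [Finset.sum_eq_single_of_mem (Sj j) hjT h0,
        if_pos (Or.inl ⟨hj, fun hb => hbS (hsub j hb)⟩)]
    · obtain ⟨j, hj⟩ := hcover _ hbS
      have hjT : Sj j ∈ T := Finset.mem_image_of_mem _ (Finset.mem_univ _)
      rw [if_pos (Or.inr ⟨haS, hbS⟩)]
      symm
      have h0 : ∀ C ∈ T, C ≠ Sj j →
          (if (src e ∈ C ∧ tgt e ∉ C) ∨ (src e ∉ C ∧ tgt e ∈ C)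
            then ν e / d e else 0) = 0 := by
        intro C hC hne
        rw [if_neg]
        rintro (⟨ha, hb⟩ | ⟨ha, hb⟩)
        · exact haS (hTsub C hC ha)
        · exact hne (huniq C hC (Sj j) hjT _ hb hj)
      rw [Finset.sum_eq_single_of_mem (Sj j) hjT h0,
        if_pos (Or.inr ⟨fun ha => haS (hsub j ha), hj⟩)]
    · rw [if_neg (by simp [haS, hbS])]
      symm
      refine Finset.sum_eq_zero fun C hC => ?_
      rw [if_neg]
      rintro (⟨ha, hb⟩ | ⟨ha, hb⟩)
      · exact haS (hTsub C hC ha)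
      · exact hbS (hTsub C hC hb)
  have hPersum : Per S = ∑ C ∈ T, Per C := by
    rw [hPer S]
    calc (∑ e, if (src e ∈ S ∧ tgt e ∉ S) ∨ (src e ∉ S ∧ tgt e ∈ S) then ν e / d e else 0)
        = ∑ e, ∑ C ∈ T, (if (src e ∈ C ∧ tgt e ∉ C) ∨ (src e ∉ C ∧ tgt e ∈ C)
            then ν e / d e else 0) := Finset.sum_congr rfl fun e _ => hedge e
      _ = ∑ C ∈ T, ∑ e, (if (src e ∈ C ∧ tgt e ∉ C) ∨ (src e ∉ C ∧ tgt e ∈ C)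
            then ν e / d e else 0) := Finset.sum_comm
      _ = ∑ C ∈ T, Per C := Finset.sum_congr rfl fun C _ => (hPer C).symm
  set m := Finset.inf' Finset.univ ⟨⟨0, hn⟩, Finset.mem_univ _⟩ (fun j => q (Sj j)) with hm
  have hqnonneg : ∀ j, 0 ≤ q (Sj j) := by
    intro j
    rw [hq]
    exact div_nonneg (hPer0 _) (Real.rpow_nonneg
      (le_min (Finset.sum_nonneg fun x _ => hμ0 x) (Finset.sum_nonneg fun x _ => hμ0 x)) _)
  have hm0 : 0 ≤ m := Finset.le_inf' _ _ fun j _ => hqnonneg j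
  have hmin : ∀ j, min (∑ x ∈ Sj j, μ x) (∑ x ∈ (Sj j)ᶜ, μ x) = ∑ x ∈ Sj j, μ x := by
    intro j
    apply min_eq_left
    have h1 : ∑ x ∈ Sj j, μ x ≤ ∑ x ∈ S, μ x :=
      Finset.sum_le_sum_of_subset_of_nonneg (hsub j) fun x _ _ => hμ0 x
    have h2 : ∑ x ∈ Sᶜ, μ x ≤ ∑ x ∈ (Sj j)ᶜ, μ x :=
      Finset.sum_le_sum_of_subset_of_nonneg (Finset.compl_subset_compl.2 (hsub j))
        fun x _ _ => hμ0 x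
    linarith
  have hmq : ∀ C ∈ T, m * (∑ x ∈ C, μ x) ^ θ ≤ Per C := by
    intro C hC
    obtain ⟨j, rfl⟩ := hTmem C hC
    have h1 : m ≤ q (Sj j) := Finset.inf'_le _ (Finset.mem_univ j)
    rw [hq, hmin j] at h1
    rcases lt_or_eq_of_le (Real.rpow_nonneg (Finset.sum_nonneg fun x _ => hμ0 x) θ)
      with hpos | h0
    · exact (le_div_iff₀ hpos).1 h1
    · rw [← h0, mul_zero]; exact hPer0 _
  have key : m * (∑ x ∈ S, μ x) ^ θ ≤ Per S := by
    calc m * (∑ x ∈ S, μ x) ^ θ ≤ m * ∑ C ∈ T, (∑ x ∈ C, μ x) ^ θ := by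
          apply mul_le_mul_of_nonneg_left _ hm0
          rw [hμsum]
          exact rpow_sum_le_sum_rpow T hTne _ (fun C => Finset.sum_nonneg fun x _ => hμ0 x)
            hθ0 hθ1
      _ = ∑ C ∈ T, m * (∑ x ∈ C, μ x) ^ θ := Finset.mul_sum _ _ _
      _ ≤ ∑ C ∈ T, Per C := Finset.sum_le_sum hmq
      _ = Per S := hPersum.symm
  rw [hq S, min_eq_left hS]
  rcases lt_or_eq_of_le (Real.rpow_nonneg (Finset.sum_nonneg fun x _ => hμ0 x) θ)
    with hpos | h0
  · exact (le_div_iff₀ hpos).2 key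
  · rw [← h0, div_zero]
    have hMS : ∑ x ∈ S, μ x = 0 := by
      by_contra hne
      have hlt : 0 < ∑ x ∈ S, μ x :=
        lt_of_le_of_ne (Finset.sum_nonneg fun x _ => hμ0 x) (Ne.symm hne)
      exact absurd h0.symm (ne_of_gt (Real.rpow_pos_of_pos hlt θ))
    have hθne : θ ≠ 0 := by
      intro h
      rw [h, Real.rpow_zero] at h0
      exact one_ne_zero h0.symm
    have hj0 : ∑ x ∈ Sj ⟨0, hn⟩, μ x = 0 := by
      have h1 : ∑ x ∈ Sj ⟨0, hn⟩, μ x ≤ ∑ x ∈ S, μ x :=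
        Finset.sum_le_sum_of_subset_of_nonneg (hsub _) fun x _ _ => hμ0 x
      have h2 : 0 ≤ ∑ x ∈ Sj ⟨0, hn⟩, μ x := Finset.sum_nonneg fun x _ => hμ0 x
      linarith
    have hq0 : q (Sj ⟨0, hn⟩) = 0 := by
      rw [hq, hmin, hj0, Real.zero_rpow hθne, div_zero]
    calc m ≤ q (Sj ⟨0, hn⟩) := Finset.inf'_le _ (Finset.mem_univ _)
      _ = 0 := hq0
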